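/- Let f : X → ℝ be Hölder continuous admitting a unique maximizing measure μ_∞, and let V be a calibrated subaction for f. If z ∈ X satisfies R_+^∞(z) < ∞, then every point p in the support of μ_∞ is an accumulation point of the orbit (σ^n(z))_{n≥0}. -/

import Mathlib

open MeasureTheory Filter Topology Set ENNReal

noncomputable section

namespace GXY

variable {M : Type*}

/-- The shift map on the sequence space `ℕ → M`. -/
def shift (x : ℕ → M) : ℕ → M := fun n => x (n + 1)

/-- Prepending a symbol `a` to a sequence `x`. -/
def cons (a : M) (x : ℕ → M) : ℕ → M := fun n => Nat.casesOn n a x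

/-- The metric `d(x,y) = ∑ θ^n d_M(x_n, y_n)` on `ℕ → M`. -/
def D [MetricSpace M] (θ : ℝ) (x y : ℕ → M) : ℝ := ∑' n, θ ^ n * dist (x n) (y n)

/-- Hölder continuity with respect to the metric `D θ`. -/
def IsHolder [MetricSpace M] (θ : ℝ) (f : (ℕ → M) → ℝ) : Prop :=
  ∃ C > (0 : ℝ), ∃ α ∈ Set.Ioc (0 : ℝ) 1, ∀ x y, |f x - f y| ≤ C * (D θ x y) ^ α

/-- Shift-invariant Borel probability measures on `ℕ → M`. -/
def IsInvProb [MetricSpace M] [MeasurableSpace M] (μ : Measure (ℕ → M)) : Prop :=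
  IsProbabilityMeasure μ ∧ μ.map shift = μ

/-- The maximal ergodic average `β(f)`. -/
def betaF [MetricSpace M] [MeasurableSpace M] (f : (ℕ → M) → ℝ) : ℝ :=
  sSup { r | ∃ μ : Measure (ℕ → M), IsInvProb μ ∧ r = ∫ x, f x ∂μ }

/-- A maximizing measure for `f`. -/
def IsMaximizing [MetricSpace M] [MeasurableSpace M] (f : (ℕ → M) → ℝ)
    (μ : Measure (ℕ → M)) : Prop :=
  IsInvProb μ ∧ ∫ x, f x ∂μ = betaF f

/-- A calibrated subaction `V` for `f`:
`V y = max_{σ x = y} (f x + V x - β f)` for every `y`. -/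
def IsCalibrated [MetricSpace M] [MeasurableSpace M] (f V : (ℕ → M) → ℝ) : Prop :=
  Continuous V ∧
    ∀ y, IsGreatest { t | ∃ x, shift x = y ∧ t = f x + V x - betaF f } (V y)

/-- The Ruelle transfer operator `(L_g w)(x) = ∫_M e^{g(ax)} w(ax) dm(a)`. -/
def Ruelle [MetricSpace M] [MeasurableSpace M] (m : Measure M) (g w : (ℕ → M) → ℝ) :
    (ℕ → M) → ℝ :=
  fun x => ∫ a, Real.exp (g (cons a x)) * w (cons a x) ∂m

/-- `R₊ = β(f) + V ∘ σ - V - f ≥ 0`. -/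
def Rplus [MetricSpace M] [MeasurableSpace M] (f V : (ℕ → M) → ℝ) (x : ℕ → M) : ℝ :=
  betaF f + V (shift x) - V x - f x

/-- `R₊^∞(z) = ∑_{j≥0} R₊(σ^j z) ∈ [0,∞]`. -/
def RplusInf [MetricSpace M] [MeasurableSpace M] (f V : (ℕ → M) → ℝ) (z : ℕ → M) : ℝ≥0∞ :=
  ∑' j : ℕ, ENNReal.ofReal (Rplus f V (shift^[j] z))

/-- `R₋ = f + V - V ∘ σ - β(f) ≤ 0`. -/
def Rminus [MetricSpace M] [MeasurableSpace M] (f V : (ℕ → M) → ℝ) (x : ℕ → M) : ℝ :=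
  f x + V x - V (shift x) - betaF f

/-- The Birkhoff sum `R₋^k = ∑_{j<k} R₋ ∘ σ^j`. -/
def RminusBirk [MetricSpace M] [MeasurableSpace M] (f V : (ℕ → M) → ℝ) (k : ℕ)
    (z : ℕ → M) : ℝ :=
  ∑ j ∈ Finset.range k, Rminus f V (shift^[j] z)

/-- Extended-real logarithm with the convention `log 0 = -∞`. -/
def elog (t : ℝ) : EReal := if t = 0 then ⊥ else ((Real.log t : ℝ) : EReal)


-- ### Auxiliary lemmas ###


open TopologicalSpace in
lemma exists_subseq_weak_limit {X : Type*} [MetricSpace X] [CompactSpace X]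
    [SecondCountableTopology X] [MeasurableSpace X] [BorelSpace X] [Nonempty X]
    (μs : ℕ → Measure X) (hp : ∀ n, IsProbabilityMeasure (μs n)) :
    ∃ ν : Measure X, IsProbabilityMeasure ν ∧ ∃ φ : ℕ → ℕ, (∀ k, k ≤ φ k) ∧
      ∀ G : Set X, IsOpen G → ν G ≤ atTop.liminf (fun k => μs (φ k) G) := by
  classical
  have hfin : ∀ n (A : Set X), μs n A ≠ ⊤ := by
    intro n A
    haveI := hp n
    exact measure_ne_top _ _
  -- countable basis
  obtain ⟨e, he⟩ : ∃ e : ℕ → Set X, countableBasis X = range e := by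
    refine (countable_countableBasis X).exists_eq_range ?_
    obtain ⟨x⟩ := ‹Nonempty X›
    obtain ⟨v, hv, -, -⟩ := (isBasis_countableBasis X).exists_subset_of_mem_open
      (mem_univ x) isOpen_univ
    exact ⟨v, hv⟩
  have heo : ∀ i, IsOpen (e i) := fun i =>
    isOpen_of_mem_countableBasis (by rw [he]; exact mem_range_self i)
  set Uu : Finset ℕ → Set X := fun S => ⋃ i ∈ S, e i with hUu
  have hUuo : ∀ S, IsOpen (Uu S) := fun S => isOpen_biUnion (fun i _ => heo i)
  have hUm : ∀ S, MeasurableSet (Uu S) := fun S => (hUuo S).measurableSet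
  -- ultrafilter and limits
  set 𝒰 : Ultrafilter ℕ := Ultrafilter.of atTop with h𝒰def
  have h𝒰 : (𝒰 : Filter ℕ) ≤ atTop := Ultrafilter.of_le _
  set g : Finset ℕ → ℕ → ℝ := fun S n => (μs n (Uu S)).toReal with hg
  have hg01 : ∀ S n, g S n ∈ Icc (0:ℝ) 1 := by
    intro S n
    constructor
    · exact ENNReal.toReal_nonneg
    · refine ENNReal.toReal_le_of_le_ofReal zero_le_one ?_
      rw [ENNReal.ofReal_one]
      exact le_trans (measure_mono (subset_univ _)) (by rw [(hp n).measure_univ])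
  have hlim : ∀ S : Finset ℕ, ∃ x ∈ Icc (0:ℝ) 1, Tendsto (g S) (𝒰 : Filter ℕ) (𝓝 x) := by
    intro S
    obtain ⟨x, hx, hle⟩ := isCompact_Icc.ultrafilter_le_nhds (Ultrafilter.map (g S) 𝒰)
      (by
        rw [le_principal_iff, Ultrafilter.coe_map, mem_map]
        exact univ_mem' (fun n => hg01 S n))
    refine ⟨x, hx, ?_⟩
    rwa [Ultrafilter.coe_map] at hle
  choose a ha hta using hlim
  -- additivity and subadditivity of a
  have ha_sub : ∀ (S : Finset ℕ) (T : Finset ℕ) (Sf : ℕ → Finset ℕ),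
      (Uu S ⊆ ⋃ i ∈ T, Uu (Sf i)) → a S ≤ ∑ i ∈ T, a (Sf i) := by
    intro S T Sf hsub
    have hpt : ∀ n, g S n ≤ ∑ i ∈ T, g (Sf i) n := by
      intro n
      have h1 : μs n (Uu S) ≤ ∑ i ∈ T, μs n (Uu (Sf i)) :=
        le_trans (measure_mono hsub) (measure_biUnion_finset_le _ _)
      have h2 : (∑ i ∈ T, μs n (Uu (Sf i))).toReal = ∑ i ∈ T, g (Sf i) n :=
        ENNReal.toReal_sum (fun i _ => hfin n _)
      rw [hg]
      calc (μs n (Uu S)).toReal ≤ (∑ i ∈ T, μs n (Uu (Sf i))).toReal :=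
            ENNReal.toReal_mono (ENNReal.sum_ne_top.mpr fun i _ => hfin n _) h1
        _ = _ := h2
    exact le_of_tendsto_of_tendsto' (hta S)
      (tendsto_finset_sum T (fun i _ => hta (Sf i))) hpt
  have ha_add : ∀ S₁ S₂ : Finset ℕ, Disjoint (Uu S₁) (Uu S₂) →
      a (S₁ ∪ S₂) = a S₁ + a S₂ := by
    intro S₁ S₂ hd
    have hUU : Uu (S₁ ∪ S₂) = Uu S₁ ∪ Uu S₂ := by
      simp [hUu, Finset.set_biUnion_union]
    have hpt : ∀ n, g (S₁ ∪ S₂) n = g S₁ n + g S₂ n := by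
      intro n
      rw [hg]
      simp only [hUU]
      rw [measure_union hd (hUm S₂), ENNReal.toReal_add (hfin n _) (hfin n _)]
    refine tendsto_nhds_unique (hta (S₁ ∪ S₂)) ?_
    have := (hta S₁).add (hta S₂)
    refine Tendsto.congr (fun n => (hpt n).symm) this
  -- the set function m
  set m : Set X → ℝ≥0∞ :=
    fun A => ⨆ S : Finset ℕ, ⨆ _ : closure (Uu S) ⊆ A, ENNReal.ofReal (a S) with hm
  have hle_m : ∀ {S : Finset ℕ} {A : Set X}, closure (Uu S) ⊆ A →
      ENNReal.ofReal (a S) ≤ m A := by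
    intro S A h
    exact le_iSup_of_le S (le_iSup (fun _ => ENNReal.ofReal (a S)) h)
  have hm_le_one : ∀ A, m A ≤ 1 := by
    intro A
    refine iSup_le fun S => iSup_le fun _ => ?_
    exact ENNReal.ofReal_le_one.mpr (ha S).2
  have hm_empty : m ∅ = 0 := by
    refine le_antisymm (iSup_le fun S => iSup_le fun hS => ?_) (zero_le)
    have hU : Uu S = ∅ := subset_empty_iff.mp (subset_closure.trans hS)
    have : a S = 0 := by
      refine tendsto_nhds_unique (hta S) ?_
      have : g S = fun _ => (0:ℝ) := by
        funext n; rw [hg]; simp [hU]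
      rw [this]; exact tendsto_const_nhds
    simp [this]
  -- core finite subadditivity
  have hcore : ∀ (S : Finset ℕ) (T : Finset ℕ) (A : ℕ → Set X),
      (∀ i ∈ T, IsOpen (A i)) → closure (Uu S) ⊆ ⋃ i ∈ T, A i →
      ENNReal.ofReal (a S) ≤ ∑ i ∈ T, m (A i) := by
    intro S T A hAo hKA
    set K := closure (Uu S) with hK
    have hKc : IsCompact K := isClosed_closure.isCompact
    have hpt : ∀ x : X, x ∈ K → ∃ (j : ℕ) (i : ℕ), i ∈ T ∧ x ∈ e j ∧ closure (e j) ⊆ A i := by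
      intro x hx
      obtain ⟨i, hiT, hxA⟩ := mem_iUnion₂.mp (hKA hx)
      obtain ⟨v, hvo, hxv, hcv⟩ := normal_exists_closure_subset isClosed_singleton
        (hAo i hiT) (singleton_subset_iff.mpr hxA)
      obtain ⟨w, hwb, hxw, hwv⟩ := (isBasis_countableBasis X).exists_subset_of_mem_open
        (hxv rfl) hvo
      rw [he] at hwb
      obtain ⟨j, hj⟩ := hwb
      refine ⟨j, i, hiT, by rw [hj]; exact hxw, ?_⟩
      rw [hj]
      exact le_trans (closure_mono hwv) hcv
    have hpt' : ∀ x : K, ∃ (j : ℕ) (i : ℕ), i ∈ T ∧ (x : X) ∈ e j ∧ closure (e j) ⊆ A i :=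
      fun x => hpt x x.2
    choose j i hiT hmem hcl using hpt'
    have hcov : K ⊆ ⋃ x : K, e (j x) := fun x hx =>
      mem_iUnion.mpr ⟨⟨x, hx⟩, hmem ⟨x, hx⟩⟩
    obtain ⟨t, ht⟩ := hKc.elim_finite_subcover (fun x : K => e (j x))
      (fun x => heo (j x)) hcov
    set Sf : ℕ → Finset ℕ := fun i₀ => (t.filter (fun x => i x = i₀)).image j with hSf
    have hSub : Uu S ⊆ ⋃ i₀ ∈ T, Uu (Sf i₀) := by
      intro y hy
      obtain ⟨x, hxt, hyx⟩ := mem_iUnion₂.mp (ht (subset_closure hy))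
      refine mem_iUnion₂.mpr ⟨i x, hiT x, ?_⟩
      refine mem_iUnion₂.mpr ⟨j x, ?_, hyx⟩
      exact Finset.mem_image.mpr ⟨x, Finset.mem_filter.mpr ⟨hxt, rfl⟩, rfl⟩
    have hclSf : ∀ i₀ ∈ T, closure (Uu (Sf i₀)) ⊆ A i₀ := by
      intro i₀ _
      rw [hUu]
      rw [Finset.closure_biUnion]
      refine iUnion₂_subset fun n hn => ?_
      obtain ⟨x, hxf, rfl⟩ := Finset.mem_image.mp hn
      have := (Finset.mem_filter.mp hxf).2
      rw [← this]
      exact hcl x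
    calc ENNReal.ofReal (a S) ≤ ENNReal.ofReal (∑ i₀ ∈ T, a (Sf i₀)) :=
          ENNReal.ofReal_le_ofReal (ha_sub S T Sf hSub)
      _ = ∑ i₀ ∈ T, ENNReal.ofReal (a (Sf i₀)) :=
          ENNReal.ofReal_sum_of_nonneg (fun i₀ _ => (ha (Sf i₀)).1)
      _ ≤ ∑ i₀ ∈ T, m (A i₀) := Finset.sum_le_sum (fun i₀ hi₀ => hle_m (hclSf i₀ hi₀))
  -- the outer measure
  set ρ : Set X → ℝ≥0∞ := fun A => if IsOpen A then m A else ⊤ with hρ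
  have hρ0 : ρ ∅ = 0 := by rw [hρ]; simp [isOpen_empty, hm_empty]
  set μStar : OuterMeasure X := OuterMeasure.ofFunction ρ hρ0 with hμStar
  -- disjoint superadditivity of m
  have hdisj : ∀ {P Q G : Set X}, Disjoint P Q → P ⊆ G → Q ⊆ G →
      m P + m Q ≤ m G := by
    intro P Q G hPQ hPG hQG
    rw [hm]
    refine iSup_add_iSup_le ?_
    intro S₁ S₂
    by_cases hc₁ : closure (Uu S₁) ⊆ P
    · by_cases hc₂ : closure (Uu S₂) ⊆ Q
      · rw [iSup_pos hc₁, iSup_pos hc₂]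
        have hd : Disjoint (Uu S₁) (Uu S₂) :=
          hPQ.mono (subset_closure.trans hc₁) (subset_closure.trans hc₂)
        rw [← ENNReal.ofReal_add (ha S₁).1 (ha S₂).1, ← ha_add S₁ S₂ hd]
        refine hle_m ?_
        have : Uu (S₁ ∪ S₂) = Uu S₁ ∪ Uu S₂ := by simp [hUu, Finset.set_biUnion_union]
        rw [this, closure_union]
        exact union_subset (hc₁.trans hPG) (hc₂.trans hQG)
      · simp only [iSup_neg hc₂, _root_.bot_eq_zero, add_zero, iSup_pos hc₁]
        exact hle_m (hc₁.trans hPG)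
    · simp only [iSup_neg hc₁, _root_.bot_eq_zero, zero_add]
      refine iSup_le fun hc₂ => hle_m (hc₂.trans hQG)
  -- metric outer measure
  have hmetric : μStar.IsMetric := by
    intro s t hst
    refine le_antisymm (measure_union_le s t) ?_
    obtain ⟨r, hr0, hsep⟩ := hst
    rw [hμStar, OuterMeasure.ofFunction_apply]
    refine le_iInf fun t' => le_iInf fun ht' => ?_
    by_cases hop : ∀ n, IsOpen (t' n)
    · set Ns := {x : X | EMetric.infEdist x s < r/2} with hNs
      set Nt := {x : X | EMetric.infEdist x t < r/2} with hNt
      have hNso : IsOpen Ns := isOpen_lt EMetric.continuous_infEdist continuous_const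
      have hNto : IsOpen Nt := isOpen_lt EMetric.continuous_infEdist continuous_const
      have hsNs : s ⊆ Ns := fun x hx => by
        rw [hNs, mem_setOf_eq, show EMetric.infEdist x s = 0 from EMetric.infEdist_zero_of_mem hx]
        exact ENNReal.half_pos hr0
      have htNt : t ⊆ Nt := fun x hx => by
        rw [hNt, mem_setOf_eq, show EMetric.infEdist x t = 0 from EMetric.infEdist_zero_of_mem hx]
        exact ENNReal.half_pos hr0
      have hNd : Disjoint Ns Nt := by
        rw [Set.disjoint_left]
        intro x hxs hxt
        obtain ⟨y, hy, hxy⟩ := EMetric.infEdist_lt_iff.mp hxs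
        obtain ⟨y', hy', hxy'⟩ := EMetric.infEdist_lt_iff.mp hxt
        have h1 : r ≤ edist y y' := hsep y hy y' hy'
        have h2 : edist y y' < r := by
          calc edist y y' ≤ edist y x + edist x y' := edist_triangle _ _ _
            _ < r/2 + r/2 := ENNReal.add_lt_add (by rwa [edist_comm]) hxy'
            _ = r := ENNReal.add_halves r
        exact absurd h1 (not_le.mpr h2)
      have hcov_s : s ⊆ ⋃ n, t' n ∩ Ns := by
        intro x hx
        obtain ⟨n, hn⟩ := mem_iUnion.mp (ht' (Or.inl hx))
        exact mem_iUnion.mpr ⟨n, hn, hsNs hx⟩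
      have hcov_t : t ⊆ ⋃ n, t' n ∩ Nt := by
        intro x hx
        obtain ⟨n, hn⟩ := mem_iUnion.mp (ht' (Or.inr hx))
        exact mem_iUnion.mpr ⟨n, hn, htNt hx⟩
      have h1 : μStar s ≤ ∑' n, ρ (t' n ∩ Ns) := by
        rw [hμStar, OuterMeasure.ofFunction_apply]
        exact iInf₂_le (fun n => t' n ∩ Ns) hcov_s
      have h2 : μStar t ≤ ∑' n, ρ (t' n ∩ Nt) := by
        rw [hμStar, OuterMeasure.ofFunction_apply]
        exact iInf₂_le (fun n => t' n ∩ Nt) hcov_t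
      calc μStar s + μStar t ≤ (∑' n, ρ (t' n ∩ Ns)) + ∑' n, ρ (t' n ∩ Nt) :=
            add_le_add h1 h2
        _ = ∑' n, (ρ (t' n ∩ Ns) + ρ (t' n ∩ Nt)) := (ENNReal.tsum_add).symm
        _ ≤ ∑' n, ρ (t' n) := by
            refine ENNReal.tsum_le_tsum fun n => ?_
            rw [hρ]
            simp only [if_pos ((hop n).inter hNso), if_pos ((hop n).inter hNto),
              if_pos (hop n)]
            exact hdisj (hNd.mono inter_subset_right inter_subset_right)
              inter_subset_left inter_subset_left
    · push_neg at hop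
      obtain ⟨n, hn⟩ := hop
      have : ρ (t' n) = ⊤ := by rw [hρ]; simp [hn]
      refine le_trans le_top ?_
      rw [← this]
      exact ENNReal.le_tsum n
  -- total mass one
  have hJ : ∃ J : Finset ℕ, Uu J = univ := by
    have hcov : (univ : Set X) ⊆ ⋃ i, e i := by
      rw [← sUnion_range, ← he, (isBasis_countableBasis X).sUnion_eq]
    obtain ⟨J, hJ⟩ := isCompact_univ.elim_finite_subcover e heo hcov
    exact ⟨J, subset_antisymm (subset_univ _) hJ⟩
  obtain ⟨J, hJuniv⟩ := hJ
  have haJ : a J = 1 := by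
    refine tendsto_nhds_unique (hta J) ?_
    have : g J = fun _ => (1:ℝ) := by
      funext n; simp only [hg, hJuniv, (hp n).measure_univ, ENNReal.toReal_one]
    rw [this]; exact tendsto_const_nhds
  have hμStar_univ : μStar univ = 1 := by
    refine le_antisymm ?_ ?_
    · refine le_trans (OuterMeasure.ofFunction_le _) ?_
      simp only [hρ]
      rw [if_pos isOpen_univ]
      exact hm_le_one _
    · rw [hμStar, OuterMeasure.ofFunction_apply]
      refine le_iInf fun t' => le_iInf fun ht' => ?_
      by_cases hop : ∀ n, IsOpen (t' n)
      · obtain ⟨T, hT⟩ := isCompact_univ.elim_finite_subcover t' hop (by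
          simpa using ht')
        have h1 : closure (Uu J) ⊆ ⋃ i ∈ T, t' i := by
          rw [hJuniv, closure_univ]
          exact hT
        have := hcore J T t' (fun i _ => hop i) h1
        rw [haJ, ENNReal.ofReal_one] at this
        refine le_trans this ?_
        refine le_trans (le_of_eq ?_) (ENNReal.sum_le_tsum T)
        refine Finset.sum_congr rfl fun n _ => ?_
        simp only [hρ]
        rw [if_pos (hop n)]
      · push_neg at hop
        obtain ⟨n, hn⟩ := hop
        have : ρ (t' n) = ⊤ := by rw [hρ]; simp [hn]
        refine le_trans le_top ?_
        rw [← this]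
        exact ENNReal.le_tsum n
  -- the measure
  have hms : ‹MeasurableSpace X› ≤ μStar.caratheodory := by
    rw [BorelSpace.measurable_eq (α := X)]
    exact hmetric.borel_le_caratheodory
  refine ⟨μStar.toMeasure hms, ⟨by
    rw [MeasureTheory.toMeasure_apply _ _ MeasurableSet.univ, hμStar_univ]⟩, ?_⟩
  -- subsequence
  have hGoodmem : ∀ k : ℕ, {n : ℕ | k ≤ n ∧ ∀ S : Finset ℕ,
      Encodable.encode S ≤ k → |g S n - a S| < 1/(k+1)} ∈ (𝒰 : Filter ℕ) := by
    intro k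
    have h1 : {n : ℕ | k ≤ n} ∈ (𝒰 : Filter ℕ) := h𝒰 (eventually_ge_atTop k)
    have hF : {S : Finset ℕ | Encodable.encode S ≤ k}.Finite :=
      (Set.finite_Iic k).preimage (Encodable.encode_injective.injOn)
    have h2 : ∀ S ∈ {S : Finset ℕ | Encodable.encode S ≤ k},
        {n : ℕ | |g S n - a S| < 1/(k+1)} ∈ (𝒰 : Filter ℕ) := by
      intro S _
      have hε : (0:ℝ) < 1/(k+1) := by positivity
      have h3 := Metric.tendsto_nhds.mp (hta S) _ hε
      refine h3.mono fun n hn => ?_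
      rwa [Real.dist_eq] at hn
    have h4 := (Filter.biInter_mem hF).mpr h2
    filter_upwards [h1, h4] with n hn1 hn2
    exact ⟨hn1, fun S hS => mem_iInter₂.mp hn2 S hS⟩
  have hne : ∀ k, {n : ℕ | k ≤ n ∧ ∀ S : Finset ℕ,
      Encodable.encode S ≤ k → |g S n - a S| < 1/(k+1)}.Nonempty :=
    fun k => Filter.nonempty_of_mem (hGoodmem k)
  set φ : ℕ → ℕ := fun k => (hne k).choose with hφdef
  have hφspec : ∀ k, k ≤ φ k ∧ ∀ S : Finset ℕ,
      Encodable.encode S ≤ k → |g S (φ k) - a S| < 1/(k+1) := fun k => (hne k).choose_spec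
  refine ⟨φ, fun k => (hφspec k).1, ?_⟩
  have hφt : ∀ S : Finset ℕ, Tendsto (fun k => g S (φ k)) atTop (𝓝 (a S)) := by
    intro S
    rw [Metric.tendsto_atTop]
    intro ε hε
    obtain ⟨K, hK⟩ := exists_nat_one_div_lt hε
    refine ⟨max (Encodable.encode S) K, fun k hk => ?_⟩
    have h1 := (hφspec k).2 S (le_trans (le_max_left _ _) hk)
    rw [Real.dist_eq]
    have h2 : (1:ℝ)/(k+1) ≤ 1/(K+1) := by
      apply one_div_le_one_div_of_le
      · positivity
      · have : (K:ℝ) ≤ k := by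
          exact_mod_cast le_trans (le_max_right (Encodable.encode S) K) hk
        linarith
    calc |g S (φ k) - a S| < 1/(k+1) := h1
      _ ≤ 1/(K+1) := h2
      _ < ε := hK
  -- conclusion
  intro G hG
  rw [MeasureTheory.toMeasure_apply _ _ hG.measurableSet]
  have h1 : μStar G ≤ m G := by
    refine le_trans (OuterMeasure.ofFunction_le _) ?_
    simp only [hρ]
    rw [if_pos hG]
  refine le_trans h1 ?_
  refine iSup_le fun S => iSup_le fun hS => ?_
  have h2 : Tendsto (fun k => μs (φ k) (Uu S)) atTop (𝓝 (ENNReal.ofReal (a S))) := by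
    have h3 := (ENNReal.continuous_ofReal.tendsto (a S)).comp (hφt S)
    refine Tendsto.congr (fun k => ?_) h3
    simp only [Function.comp_apply, hg]
    exact ENNReal.ofReal_toReal (hfin _ _)
  rw [← h2.liminf_eq]
  refine liminf_le_liminf (Eventually.of_forall fun k => ?_)
  exact measure_mono (subset_closure.trans hS)

lemma eventually_D_le [MetricSpace M] {θ : ℝ} (hθ : θ ∈ Set.Ioo (0:ℝ) 1)
    (hdiam : ∀ a b : M, dist a b ≤ 1) (x : ℕ → M) {δ : ℝ} (hδ : 0 < δ) :
    ∀ᶠ y in 𝓝 x, D θ x y ≤ δ := by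
  obtain ⟨hθ0, hθ1⟩ := hθ
  have hsum : ∀ y : ℕ → M, Summable (fun n => θ^n * dist (x n) (y n)) := by
    intro y
    refine Summable.of_nonneg_of_le (fun n => by positivity) (fun n => ?_)
      (summable_geometric_of_lt_one hθ0.le hθ1)
    calc θ^n * dist (x n) (y n) ≤ θ^n * 1 :=
          mul_le_mul_of_nonneg_left (hdiam _ _) (by positivity)
      _ = θ^n := mul_one _
  obtain ⟨N, hN⟩ : ∃ N : ℕ, θ^N * (1-θ)⁻¹ ≤ δ/2 := by
    have h1 : Tendsto (fun n : ℕ => θ^n * (1-θ)⁻¹) atTop (𝓝 (0 * (1-θ)⁻¹)) :=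
      (tendsto_pow_atTop_nhds_zero_of_lt_one hθ0.le hθ1).mul_const _
    rw [zero_mul] at h1
    exact ((h1.eventually_lt_const (by positivity : (0:ℝ) < δ/2)).mono
      (fun n hn => hn.le)).exists
  set c := δ/(2*(N+1)) with hc
  have hcpos : 0 < c := by positivity
  have hev : ∀ᶠ y in 𝓝 x, ∀ n ∈ Finset.range N, dist (x n) (y n) < c := by
    rw [Filter.eventually_all_finset]
    intro n _
    have hcont : Tendsto (fun y : ℕ → M => y n) (𝓝 x) (𝓝 (x n)) :=
      (continuous_apply n).tendsto x
    have h2 := hcont (Metric.ball_mem_nhds (x n) hcpos)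
    refine Filter.mem_of_superset h2 ?_
    intro y hy
    rw [Set.mem_setOf_eq, dist_comm]
    exact Metric.mem_ball.mp hy
  refine hev.mono fun y hy => ?_
  have hsplit := (hsum y).sum_add_tsum_nat_add N
  rw [D, ← hsplit]
  have h1 : ∑ n ∈ Finset.range N, θ^n * dist (x n) (y n) ≤ δ/2 := by
    have hb : ∀ n ∈ Finset.range N, θ^n * dist (x n) (y n) ≤ c := by
      intro n hn
      calc θ^n * dist (x n) (y n) ≤ 1 * dist (x n) (y n) :=
            mul_le_mul_of_nonneg_right (pow_le_one₀ hθ0.le hθ1.le) dist_nonneg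
        _ = dist (x n) (y n) := one_mul _
        _ ≤ c := (hy n hn).le
    calc ∑ n ∈ Finset.range N, θ^n * dist (x n) (y n) ≤ N * c := by
          have h3 := Finset.sum_le_card_nsmul _ _ c hb
          simpa [nsmul_eq_mul] using h3
      _ ≤ δ/2 := by
          have h3 : (N:ℝ) ≤ N+1 := by linarith
          have h4 : (0:ℝ) < 2*((N:ℝ)+1) := by positivity
          calc (N:ℝ) * c ≤ ((N:ℝ)+1) * c :=
                mul_le_mul_of_nonneg_right h3 hcpos.le
            _ = δ/2 := by rw [hc]; field_simp
  have h2 : ∑' n : ℕ, θ^(n+N) * dist (x (n+N)) (y (n+N)) ≤ δ/2 := by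
    have hg : Summable (fun n : ℕ => θ^(n+N)) := by
      simpa [pow_add] using (summable_geometric_of_lt_one hθ0.le hθ1).mul_right (θ^N)
    have hs2 : Summable (fun n : ℕ => θ^(n+N) * dist (x (n+N)) (y (n+N))) := by
      refine Summable.of_nonneg_of_le (fun n => by positivity) (fun n => ?_) hg
      calc θ^(n+N) * dist (x (n+N)) (y (n+N)) ≤ θ^(n+N) * 1 :=
            mul_le_mul_of_nonneg_left (hdiam _ _) (by positivity)
        _ = θ^(n+N) := mul_one _
    have h5 : ∑' n : ℕ, θ^(n+N) * dist (x (n+N)) (y (n+N)) ≤ ∑' n : ℕ, θ^(n+N) := by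
      refine hs2.tsum_le_tsum (fun n => ?_) hg
      calc θ^(n+N) * dist (x (n+N)) (y (n+N)) ≤ θ^(n+N) * 1 :=
            mul_le_mul_of_nonneg_left (hdiam _ _) (by positivity)
        _ = θ^(n+N) := mul_one _
    have h6 : ∑' n : ℕ, θ^(n+N) = θ^N * (1-θ)⁻¹ := by
      have : ∀ n : ℕ, θ^(n+N) = θ^n * θ^N := fun n => pow_add θ n N
      rw [tsum_congr this, tsum_mul_right, tsum_geometric_of_lt_one hθ0.le hθ1]
      ring
    rw [h6] at h5
    exact h5.trans hN
  linarith

lemma IsHolder.continuous [MetricSpace M] {θ : ℝ} (hθ : θ ∈ Set.Ioo (0:ℝ) 1)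
    (hdiam : ∀ a b : M, dist a b ≤ 1) {f : (ℕ → M) → ℝ} (hf : IsHolder θ f) :
    Continuous f := by
  obtain ⟨C, hC, α, hα, hHol⟩ := hf
  rw [continuous_iff_continuousAt]
  intro x
  rw [ContinuousAt, Metric.tendsto_nhds]
  intro ε hε
  set δ := (ε/(2*C)) ^ (α⁻¹ : ℝ) with hδdef
  have hδ : 0 < δ := Real.rpow_pos_of_pos (by positivity) _
  have hkey : C * δ ^ α = ε/2 := by
    rw [hδdef, ← Real.rpow_mul (by positivity), inv_mul_cancel₀ (ne_of_gt hα.1),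
      Real.rpow_one]
    rw [mul_div_assoc']
    rw [mul_comm C ε, mul_div_assoc, mul_comm (2:ℝ) C, ← div_div,
      div_self hC.ne', one_div, ← div_eq_mul_inv]
  refine (eventually_D_le hθ hdiam x hδ).mono fun y hy => ?_
  have h1 : |f x - f y| ≤ C * (D θ x y)^α := hHol x y
  have hD0 : 0 ≤ D θ x y := tsum_nonneg (fun n => mul_nonneg (pow_nonneg hθ.1.le n) dist_nonneg)
  have h2 : (D θ x y)^α ≤ δ^α := Real.rpow_le_rpow hD0 hy (le_of_lt hα.1)
  rw [Real.dist_eq, abs_sub_comm]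
  calc |f x - f y| ≤ C * (D θ x y)^α := h1
    _ ≤ C * δ^α := mul_le_mul_of_nonneg_left h2 hC.le
    _ = ε/2 := hkey
    _ < ε := by linarith

theorem support_point_is_accumulation_point_of_orbit
    [MetricSpace M] [CompactSpace M] [ConnectedSpace M] [MeasurableSpace M] [BorelSpace M]
    (hdiam : ∀ a b : M, dist a b ≤ 1)
    (θ : ℝ) (hθ : θ ∈ Set.Ioo (0 : ℝ) 1)
    (f V : (ℕ → M) → ℝ) (hf : IsHolder θ f)
    (μinf : Measure (ℕ → M)) (hmax : IsMaximizing f μinf)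
    (huniq : ∀ μ' : Measure (ℕ → M), IsMaximizing f μ' → μ' = μinf)
    (hV : IsCalibrated f V)
    (z : ℕ → M) (hz : RplusInf f V z ≠ ⊤) :
    ∀ p : ℕ → M, (∀ U : Set (ℕ → M), IsOpen U → p ∈ U → 0 < μinf U) →
      MapClusterPt p atTop (fun n : ℕ => shift^[n] z) := by
  classical
  obtain ⟨hVc, hVcal⟩ := hV
  haveI : SecondCountableTopology M := EMetric.secondCountable_of_sigmaCompact M
  letI mX : MetricSpace (ℕ → M) := TopologicalSpace.metrizableSpaceMetric _
  have hf_cont : Continuous f := IsHolder.continuous hθ hdiam hf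
  have hshift_cont : Continuous (shift (M := M)) :=
    continuous_pi fun n => continuous_apply (n+1)
  have hshift_meas : Measurable (shift (M := M)) := hshift_cont.measurable
  set orb : ℕ → (ℕ → M) := fun n => shift^[n] z with horb
  have horb_succ : ∀ n, orb (n+1) = shift (orb n) := fun n =>
    Function.iterate_succ_apply' shift n z
  set Vb : BoundedContinuousFunction (ℕ → M) ℝ := BoundedContinuousFunction.mkOfCompact ⟨V, hVc⟩ with hVb
  have hVbound : ∀ x, |V x| ≤ ‖Vb‖ := fun x => by
    have h1 := Vb.norm_coe_le_norm x
    simpa [hVb] using h1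
  have hR : ∀ x, 0 ≤ Rplus f V x := by
    intro x
    have h1 : f x + V x - betaF f ≤ V (shift x) := (hVcal (shift x)).2 ⟨x, rfl, rfl⟩
    rw [Rplus]; linarith
  set CR := (RplusInf f V z).toReal with hCR
  have hRsum : ∀ m : ℕ, ∑ j ∈ Finset.range m, Rplus f V (orb j) ≤ CR := by
    intro m
    have h1 : ∑ j ∈ Finset.range m, Rplus f V (orb j)
        = (∑ j ∈ Finset.range m, ENNReal.ofReal (Rplus f V (orb j))).toReal := by
      rw [ENNReal.toReal_sum (fun j _ => ENNReal.ofReal_ne_top)]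
      exact Finset.sum_congr rfl fun j _ => (ENNReal.toReal_ofReal (hR _)).symm
    rw [h1, hCR]
    exact ENNReal.toReal_mono hz (ENNReal.sum_le_tsum _)
  have hRsum0 : ∀ m : ℕ, 0 ≤ ∑ j ∈ Finset.range m, Rplus f V (orb j) :=
    fun m => Finset.sum_nonneg fun j _ => hR _
  have htel : ∀ n : ℕ, ∑ j ∈ Finset.range n, f (orb j)
      = n * betaF f + (V (orb n) - V (orb 0))
        - ∑ j ∈ Finset.range n, Rplus f V (orb j) := by
    intro n
    induction n with
    | zero => simp
    | succ n ih =>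
      rw [Finset.sum_range_succ, Finset.sum_range_succ, ih]
      have h1 : f (orb n) = betaF f + V (orb (n+1)) - V (orb n) - Rplus f V (orb n) := by
        rw [horb_succ n, Rplus]; ring
      rw [h1]; push_cast; ring
  set avg : ℕ → ℝ := fun n => ((n:ℝ)+1)⁻¹ * ∑ j ∈ Finset.range (n+1), f (orb j)
    with havgdef
  have havg : Tendsto avg atTop (𝓝 (betaF f)) := by
    rw [← tendsto_sub_nhds_zero_iff]
    have hbound : ∀ n : ℕ, ‖avg n - betaF f‖ ≤ ((n:ℝ)+1)⁻¹ * (2*‖Vb‖ + CR) := by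
      intro n
      have hpos : (0:ℝ) < (n:ℝ)+1 := by positivity
      have h1 : avg n - betaF f
          = ((n:ℝ)+1)⁻¹ * ((V (orb (n+1)) - V (orb 0))
            - ∑ j ∈ Finset.range (n+1), Rplus f V (orb j)) := by
        have h2 := htel (n+1)
        push_cast at h2
        rw [havgdef]
        simp only
        rw [h2]
        field_simp
        ring
      have h3 : |(V (orb (n+1)) - V (orb 0))
          - ∑ j ∈ Finset.range (n+1), Rplus f V (orb j)| ≤ 2*‖Vb‖ + CR := by
        have h4 := abs_le.mp (hVbound (orb (n+1)))
        have h5 := abs_le.mp (hVbound (orb 0))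
        have h6 := hRsum (n+1)
        have h7 := hRsum0 (n+1)
        rw [abs_le]
        constructor
        · linarith [h4.1, h4.2, h5.1, h5.2]
        · linarith [h4.1, h4.2, h5.1, h5.2]
      rw [h1, Real.norm_eq_abs, abs_mul, abs_of_pos (inv_pos.mpr hpos)]
      exact mul_le_mul_of_nonneg_left h3 (inv_pos.mpr hpos).le
    refine squeeze_zero_norm hbound ?_
    have h8 : Tendsto (fun n : ℕ => ((n:ℝ)+1)⁻¹) atTop (𝓝 0) := by
      have := tendsto_one_div_add_atTop_nhds_zero_nat (𝕜 := ℝ)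
      simpa [one_div] using this
    have := h8.mul_const (2*‖Vb‖ + CR)
    simpa using this
  -- empirical measures
  set emp : ℕ → Measure (ℕ → M) := fun n =>
    ((n:ℝ≥0∞)+1)⁻¹ • ∑ j ∈ Finset.range (n+1), Measure.dirac (orb j) with hemp
  have hn1top : ∀ n : ℕ, ((n:ℝ≥0∞)+1) ≠ ⊤ := fun n =>
    ENNReal.add_ne_top.mpr ⟨ENNReal.natCast_ne_top n, ENNReal.one_ne_top⟩
  have hn10 : ∀ n : ℕ, ((n:ℝ≥0∞)+1) ≠ 0 := fun n =>
    (lt_of_lt_of_le zero_lt_one le_add_self).ne'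
  have hemp_apply : ∀ (n : ℕ) (A : Set (ℕ → M)), emp n A
      = ((n:ℝ≥0∞)+1)⁻¹ * (∑ j ∈ Finset.range (n+1), Measure.dirac (orb j)) A := by
    intro n A
    rw [hemp]
    simp [Measure.smul_apply, smul_eq_mul]
  have hemp_prob : ∀ n, IsProbabilityMeasure (emp n) := by
    intro n
    constructor
    rw [hemp_apply, Measure.finset_sum_apply]
    simp only [measure_univ]
    rw [Finset.sum_const, Finset.card_range, nsmul_eq_mul, mul_one]
    rw [show ((n+1 : ℕ) : ℝ≥0∞) = (n:ℝ≥0∞)+1 by push_cast; ring]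
    exact ENNReal.inv_mul_cancel (hn10 n) (hn1top n)
  have hemp_int : ∀ (F : BoundedContinuousFunction (ℕ → M) ℝ) (n : ℕ),
      ∫ x, F x ∂(emp n) = ((n:ℝ)+1)⁻¹ * ∑ j ∈ Finset.range (n+1), F (orb j) := by
    intro F n
    rw [hemp]
    simp only
    rw [integral_smul_measure, integral_finset_sum_measure (fun j _ => F.integrable _)]
    rw [smul_eq_mul]
    congr 1
    · rw [ENNReal.toReal_inv, ENNReal.toReal_add (ENNReal.natCast_ne_top n)
        ENNReal.one_ne_top, ENNReal.toReal_natCast, ENNReal.toReal_one]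
    · exact Finset.sum_congr rfl fun j _ => integral_dirac _ _
  -- weak limit
  obtain ⟨ν, hνp, φ, hφ, hνG⟩ := exists_subseq_weak_limit emp hemp_prob
  set νh : ProbabilityMeasure (ℕ → M) := ⟨ν, hνp⟩ with hνh
  set μsk : ℕ → ProbabilityMeasure (ℕ → M) := fun k => ⟨emp (φ k), hemp_prob _⟩ with hμsk
  have htend : Tendsto μsk atTop (𝓝 νh) := by
    refine tendsto_of_forall_isOpen_le_liminf ?_
    intro G hG
    have h1 := hνG G hG
    have aux : ENNReal.ofNNReal (atTop.liminf (fun k => μsk k G)) =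
        atTop.liminf (ENNReal.ofNNReal ∘ fun k => μsk k G) := by
      refine Monotone.map_liminf_of_continuousAt (F := atTop) ENNReal.coe_mono
        (fun k => μsk k G) ?_ ?_ ?_
      · exact ENNReal.continuous_coe.continuousAt
      · exact IsBoundedUnder.isCoboundedUnder_ge ⟨1, by simp⟩
      · exact ⟨0, by simp⟩
    have obs : ENNReal.ofNNReal (νh G) ≤ ENNReal.ofNNReal (atTop.liminf (fun k => μsk k G)) := by
      rw [aux]
      simp only [Function.comp_def, ProbabilityMeasure.ennreal_coeFn_eq_coeFn_toMeasure]
      exact h1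
    exact_mod_cast obs
  have hInt : ∀ F : BoundedContinuousFunction (ℕ → M) ℝ,
      Tendsto (fun k => ∫ x, F x ∂(emp (φ k))) atTop (𝓝 (∫ x, F x ∂ν)) := fun F =>
    ProbabilityMeasure.tendsto_iff_forall_integral_tendsto.mp htend F
  have hφatTop : Tendsto φ atTop atTop := tendsto_atTop_mono hφ tendsto_id
  -- the limit is maximizing
  set Fb : BoundedContinuousFunction (ℕ → M) ℝ := BoundedContinuousFunction.mkOfCompact ⟨f, hf_cont⟩ with hFb
  have hFbx : ∀ x, Fb x = f x := fun x => rfl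
  have hfint : ∫ x, f x ∂ν = betaF f := by
    have h1 := hInt Fb
    have h2 : (fun k => ∫ x, Fb x ∂(emp (φ k))) = fun k => avg (φ k) := by
      funext k
      rw [hemp_int Fb (φ k), havgdef]
      rfl
    rw [h2] at h1
    have h3 : Tendsto (fun k => avg (φ k)) atTop (𝓝 (betaF f)) := havg.comp hφatTop
    have h4 := tendsto_nhds_unique h1 h3
    rw [← h4]
    rfl
  -- invariance of the limit
  haveI hT2 : T2Space (ProbabilityMeasure (ℕ → M)) := by
    letI := TopologicalSpace.metrizableSpaceMetric (ProbabilityMeasure (ℕ → M))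
    infer_instance
  have hmap1 : Tendsto (fun k => (μsk k).map hshift_meas.aemeasurable) atTop
      (𝓝 (νh.map hshift_meas.aemeasurable)) :=
    ProbabilityMeasure.tendsto_map_of_tendsto_of_continuous μsk νh htend hshift_cont
  have hmap2 : Tendsto (fun k => (μsk k).map hshift_meas.aemeasurable) atTop (𝓝 νh) := by
    rw [ProbabilityMeasure.tendsto_iff_forall_integral_tendsto]
    intro F
    set Fs : BoundedContinuousFunction (ℕ → M) ℝ := F.compContinuous ⟨shift, hshift_cont⟩ with hFs
    have hFsx : ∀ x, Fs x = F (shift x) := fun x => rfl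
    set err : ℕ → ℝ := fun k => ((φ k : ℝ)+1)⁻¹ * (F (orb (φ k+1)) - F (orb 0)) with herrdef
    have hshift_sum : ∀ n : ℕ, ∑ j ∈ Finset.range (n+1), Fs (orb j)
        = ∑ j ∈ Finset.range (n+1), F (orb j) + F (orb (n+1)) - F (orb 0) := by
      intro n
      have h4 : ∀ j, Fs (orb j) = F (orb (j+1)) := fun j => by rw [hFsx, horb_succ]
      calc ∑ j ∈ Finset.range (n+1), Fs (orb j)
          = ∑ j ∈ Finset.range (n+1), F (orb (j+1)) :=
            Finset.sum_congr rfl fun j _ => h4 j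
        _ = ∑ j ∈ Finset.range (n+2), F (orb j) - F (orb 0) := by
            rw [Finset.sum_range_succ' (fun j => F (orb j)) (n+1)]
            try ring
        _ = ∑ j ∈ Finset.range (n+1), F (orb j) + F (orb (n+1)) - F (orb 0) := by
            rw [Finset.sum_range_succ]
            try ring
    have heq : ∀ k, ∫ x, F x ∂(((μsk k).map hshift_meas.aemeasurable : ProbabilityMeasure _) : Measure _)
        = ∫ x, F x ∂(emp (φ k)) + err k := by
      intro k
      have h3 : (((μsk k).map hshift_meas.aemeasurable : ProbabilityMeasure _) : Measure _)
          = (emp (φ k)).map (shift (M := M)) := by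
        rw [ProbabilityMeasure.toMeasure_map]
        rfl
      rw [h3, integral_map hshift_meas.aemeasurable F.continuous.aestronglyMeasurable]
      have h5 : ∫ x, F (shift x) ∂(emp (φ k)) = ∫ x, Fs x ∂(emp (φ k)) := by
        exact integral_congr_ae (Eventually.of_forall fun x => (hFsx x).symm)
      rw [h5, hemp_int Fs (φ k), hemp_int F (φ k), hshift_sum (φ k), herrdef]
      ring
    have herr0 : Tendsto err atTop (𝓝 0) := by
      have hgb : ∀ k, ‖err k‖ ≤ ((k:ℝ)+1)⁻¹ * (2*‖F‖) := by
        intro k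
        have hposk : (0:ℝ) < (k:ℝ)+1 := by positivity
        have hposφ : (0:ℝ) < (φ k:ℝ)+1 := by positivity
        rw [herrdef]
        simp only
        rw [Real.norm_eq_abs, abs_mul, abs_of_pos (inv_pos.mpr hposφ)]
        refine mul_le_mul ?_ ?_ (abs_nonneg _) (inv_pos.mpr hposk).le
        · refine inv_anti₀ hposk ?_
          have : (k:ℝ) ≤ (φ k:ℝ) := by exact_mod_cast hφ k
          linarith
        · have h6 := F.norm_coe_le_norm (orb (φ k+1))
          have h7 := F.norm_coe_le_norm (orb 0)
          rw [Real.norm_eq_abs] at h6 h7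
          calc |F (orb (φ k+1)) - F (orb 0)| ≤ |F (orb (φ k+1))| + |F (orb 0)| :=
                abs_sub _ _
            _ ≤ 2*‖F‖ := by linarith
      refine squeeze_zero_norm hgb ?_
      have h8 : Tendsto (fun k : ℕ => ((k:ℝ)+1)⁻¹) atTop (𝓝 0) := by
        have := tendsto_one_div_add_atTop_nhds_zero_nat (𝕜 := ℝ)
        simpa [one_div] using this
      have := h8.mul_const (2*‖F‖)
      simpa using this
    have hlim := (hInt F).add herr0
    rw [add_zero] at hlim
    exact Tendsto.congr (fun k => (heq k).symm) hlim
  have hmapeq : νh.map hshift_meas.aemeasurable = νh := tendsto_nhds_unique hmap1 hmap2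
  have hinv : ν.map (shift (M := M)) = ν := by
    have h9 := congrArg (fun μ : ProbabilityMeasure (ℕ → M) => (μ : Measure (ℕ → M))) hmapeq
    simp only [ProbabilityMeasure.toMeasure_map] at h9
    exact h9
  have hmaxν : IsMaximizing f ν := ⟨⟨hνp, hinv⟩, hfint⟩
  have hνμ : ν = μinf := huniq ν hmaxν
  -- conclusion
  intro p hp
  rw [mapClusterPt_iff_frequently]
  intro s hs
  obtain ⟨U, hUs, hUo, hpU⟩ := mem_nhds_iff.mp hs
  by_contra hcon
  rw [Filter.not_frequently] at hcon
  obtain ⟨N, hN⟩ := Filter.eventually_atTop.mp hcon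
  have hNU : ∀ n, N ≤ n → orb n ∉ U := fun n hn hmem => hN n hn (hUs hmem)
  have hcount : ∀ n, emp n U ≤ ((n:ℝ≥0∞)+1)⁻¹ * N := by
    intro n
    rw [hemp_apply, Measure.finset_sum_apply]
    refine mul_le_mul_right ?_ _
    calc ∑ j ∈ Finset.range (n+1), Measure.dirac (orb j) U
        ≤ ∑ j ∈ Finset.range (n+1), (if j < N then (1:ℝ≥0∞) else 0) := by
          refine Finset.sum_le_sum fun j _ => ?_
          rw [Measure.dirac_apply' _ hUo.measurableSet]
          by_cases hj : j < N
          · rw [if_pos hj]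
            exact Set.indicator_le_self U 1 (orb j)
          · rw [if_neg hj, Set.indicator_of_notMem (hNU j (not_lt.mp hj))]
      _ ≤ (N : ℝ≥0∞) := by
          rw [Finset.sum_boole]
          have hcard : (Finset.filter (fun j => j < N) (Finset.range (n+1))).card ≤ N := by
            have := Finset.card_le_card
              (fun j hj => Finset.mem_range.mpr ((Finset.mem_filter.mp hj).2)
                : Finset.filter (fun j => j < N) (Finset.range (n+1)) ⊆ Finset.range N)
            simpa using this
          exact_mod_cast hcard
  have hlim2 : (νh : Measure (ℕ → M)) U ≤ atTop.liminf (fun k => (μsk k : Measure (ℕ → M)) U) :=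
    ProbabilityMeasure.le_liminf_measure_open_of_tendsto htend hUo
  have hb : Tendsto (fun k => ((φ k : ℝ≥0∞)+1)⁻¹ * N) atTop (𝓝 0) := by
    have h5 : Tendsto (fun k : ℕ => ((φ k : ℝ≥0∞)+1)⁻¹) atTop (𝓝 0) := by
      have h6 : Tendsto (fun n : ℕ => ((n : ℝ≥0∞)+1)⁻¹) atTop (𝓝 0) := by
        have h7 := ENNReal.tendsto_inv_nat_nhds_zero.comp (tendsto_add_atTop_nat 1)
        refine h7.congr fun n => ?_
        simp only [Function.comp_apply]
        push_cast
        ring_nf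
      exact h6.comp hφatTop
    have h9 := ENNReal.Tendsto.mul_const h5 (Or.inr (ENNReal.natCast_ne_top N))
    simpa using h9
  have hzero : atTop.liminf (fun k => (μsk k : Measure (ℕ → M)) U) = 0 := by
    refine le_antisymm ?_ (zero_le)
    calc atTop.liminf (fun k => (μsk k : Measure (ℕ → M)) U)
        ≤ atTop.liminf (fun k => ((φ k : ℝ≥0∞)+1)⁻¹ * N) :=
          liminf_le_liminf (Eventually.of_forall fun k => hcount (φ k))
      _ = 0 := hb.liminf_eq
  have h10 : ν U ≤ 0 := by rw [← hzero]; exact hlim2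
  rw [hνμ] at h10
  exact absurd (hp U hUo hpU) (by simp [le_antisymm h10 (zero_le)])


end GXY
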